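/- For every κ ∈ {0, 1, …, 2n}, every a ∈ {0, 1}, and every generator H ∈ {Z_j : 1 ≤ j ≤ n} ∪ {X_j X_{j+1} : 1 ≤ j ≤ n−1}, the operator Q_κ^a commutes with H ⊗ I + I ⊗ H, where I is the 2^n × 2^n identity: [H ⊗ I + I ⊗ H, Q_κ^a] = 0. -/

import Mathlib

open Matrix Complex
open scoped Kronecker

noncomputable section

abbrev QIdx (n : ℕ) := Fin n → Fin 2
abbrev NMat (n : ℕ) := Matrix (QIdx n) (QIdx n) ℂ
abbrev NMat2 (n : ℕ) := Matrix (QIdx n × QIdx n) (QIdx n × QIdx n) ℂ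

/-- The 2×2 Pauli X matrix. -/
def σX : Matrix (Fin 2) (Fin 2) ℂ := !![0, 1; 1, 0]
/-- The 2×2 Pauli Y matrix. -/
def σY : Matrix (Fin 2) (Fin 2) ℂ := !![0, -Complex.I; Complex.I, 0]
/-- The 2×2 Pauli Z matrix. -/
def σZ : Matrix (Fin 2) (Fin 2) ℂ := !![1, 0; 0, -1]

/-- Tensor (Kronecker) product of `n` one-qubit matrices, realized on index type `Fin n → Fin 2`. -/
def tensor {n : ℕ} (M : Fin n → Matrix (Fin 2) (Fin 2) ℂ) : NMat n :=
  Matrix.of fun f g => ∏ i, M i (f i) (g i)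

/-- The Jordan–Wigner Majorana operator `c_μ` (0-based index: `c_{2i} = Z^{⊗i} X I…`,
`c_{2i+1} = Z^{⊗i} Y I…`). -/
def majorana (n : ℕ) (μ : Fin (2 * n)) : NMat n :=
  tensor fun j =>
    if (j : ℕ) < (μ : ℕ) / 2 then σZ
    else if (j : ℕ) = (μ : ℕ) / 2 then (if (μ : ℕ) % 2 = 0 then σX else σY)
    else 1

/-- Ordered product `c^s` of the Majorana operators indexed by a subset `s`. -/
def cProd (n : ℕ) (s : Finset (Fin (2 * n))) : NMat n :=
  ((s.sort (· ≤ ·)).map (majorana n)).prod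

/-- The module `B_κ`: the complex span of products of `κ` distinct Majoranas. -/
def Bspace (n κ : ℕ) : Submodule ℂ (NMat n) :=
  Submodule.span ℂ {M | ∃ s : Finset (Fin (2 * n)), s.card = κ ∧ M = cProd n s}

/-- The Pauli string with `Z` on qubit `j` and identity elsewhere. -/
def pauliZ (n : ℕ) (j : Fin n) : NMat n := tensor fun k => if k = j then σZ else 1

/-- The Pauli string with `X` on qubits `j` and `j+1` and identity elsewhere. -/
def pauliXX (n : ℕ) (j : Fin n) : NMat n :=
  tensor fun k => if (k : ℕ) = (j : ℕ) ∨ (k : ℕ) = (j : ℕ) + 1 then σX else 1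

/-- The parity operator `P = Z^{⊗n}`. -/
def parity (n : ℕ) : NMat n := tensor fun _ => σZ


/-- Normalization constant `(d √C(2n,κ))⁻¹` with `d = 2^n`. -/
def Qnorm (n κ : ℕ) : ℂ := ((2 ^ n : ℂ) * ((Real.sqrt (Nat.choose (2 * n) κ) : ℝ) : ℂ))⁻¹

/-- The quadratic symmetry `Q_κ^0 = (d √C(2n,κ))⁻¹ Σ_{|s|=κ} c^s ⊗ c^s`. -/
def Q0 (n κ : ℕ) : NMat2 n :=
  Qnorm n κ • ∑ s ∈ Finset.powersetCard κ (Finset.univ : Finset (Fin (2 * n))),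
    (cProd n s) ⊗ₖ (cProd n s)

/-- The sum of the (1-based) elements of `s`, i.e. `π(s)`. -/
def piSum (n : ℕ) (s : Finset (Fin (2 * n))) : ℕ := ∑ μ ∈ s, ((μ : ℕ) + 1)

/-- The quadratic symmetry
`Q_κ^1 = (d √C(2n,κ))⁻¹ (−i)^n i^{κ mod 2} Σ_{|s|=κ} (−1)^{π(s)} c^s ⊗ c^{s̄}`. -/
def Q1 (n κ : ℕ) : NMat2 n :=
  (Qnorm n κ * (-Complex.I) ^ n * Complex.I ^ (κ % 2)) •
    ∑ s ∈ Finset.powersetCard κ (Finset.univ : Finset (Fin (2 * n))),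
      ((-1 : ℂ)) ^ (piSum n s) • ((cProd n s) ⊗ₖ (cProd n sᶜ))

/-- The matchgate circuit generators `{Z_j} ∪ {X_j X_{j+1}}`. -/
def matchgateGens (n : ℕ) : Set (NMat n) :=
  {M | ∃ j : Fin n, M = pauliZ n j} ∪
  {M | ∃ j : Fin n, (j : ℕ) + 1 < n ∧ M = pauliXX n j}

/-- The two-copy representation `H ⊗ I + I ⊗ H` of a generator `H`. -/
def bigH (n : ℕ) (H : NMat n) : NMat2 n :=
  H ⊗ₖ (1 : NMat n) + (1 : NMat n) ⊗ₖ H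

lemma tensor_mul {n : ℕ} (M N : Fin n → Matrix (Fin 2) (Fin 2) ℂ) :
    tensor M * tensor N = tensor (fun i => M i * N i) := by
  ext f g
  simp only [tensor, Matrix.mul_apply, Matrix.of_apply]
  rw [← Fintype.piFinset_univ, Finset.prod_univ_sum]
  exact Finset.sum_congr rfl fun x _ => (Finset.prod_mul_distrib).symm

lemma tensor_one {n : ℕ} : tensor (fun _ : Fin n => (1 : Matrix (Fin 2) (Fin 2) ℂ)) = 1 := by
  ext f g
  simp only [tensor, Matrix.of_apply, Matrix.one_apply]
  by_cases h : f = g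
  · subst h; simp
  · obtain ⟨i, hi⟩ := Function.ne_iff.mp h
    rw [if_neg h]
    exact Finset.prod_eq_zero (Finset.mem_univ i) (by simp [Matrix.one_apply, hi])

lemma tensor_eq_smul {n : ℕ} (M N : Fin n → Matrix (Fin 2) (Fin 2) ℂ) (j : Fin n) (z : ℂ)
    (hj : M j = z • N j) (h : ∀ i, i ≠ j → M i = N i) : tensor M = z • tensor N := by
  ext f g
  simp only [tensor, Matrix.of_apply, Matrix.smul_apply, smul_eq_mul]
  rw [← Finset.mul_prod_erase Finset.univ _ (Finset.mem_univ j),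
    ← Finset.mul_prod_erase Finset.univ (fun i => N i (f i) (g i)) (Finset.mem_univ j),
    hj]
  have : ∀ i ∈ Finset.univ.erase j, M i (f i) (g i) = N i (f i) (g i) := by
    intro i hi
    rw [h i (Finset.mem_erase.mp hi).1]
  rw [Finset.prod_congr rfl this]
  simp only [Matrix.smul_apply, smul_eq_mul]
  ring


lemma σX_sq : σX * σX = 1 := by
  simp [σX, Matrix.mul_fin_two]; ext i j; fin_cases i <;> fin_cases j <;> simp [Matrix.one_apply]
lemma σY_sq : σY * σY = 1 := by
  simp [σY, Matrix.mul_fin_two]; ext i j; fin_cases i <;> fin_cases j <;>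
    simp [Matrix.one_apply, Complex.I_mul_I]
lemma σZ_sq : σZ * σZ = 1 := by
  simp [σZ, Matrix.mul_fin_two]; ext i j; fin_cases i <;> fin_cases j <;> simp [Matrix.one_apply]
lemma σXσY : σX * σY = Complex.I • σZ := by
  simp [σX, σY, σZ, Matrix.mul_fin_two]
lemma σYσX : σY * σX = (-Complex.I) • σZ := by
  simp [σX, σY, σZ, Matrix.mul_fin_two]
lemma σYσZ : σY * σZ = Complex.I • σX := by
  simp [σX, σY, σZ, Matrix.mul_fin_two]
lemma σXσZ_anti : σX * σZ = (-1 : ℂ) • (σZ * σX) := by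
  simp [σX, σZ, Matrix.mul_fin_two]
lemma σYσZ_anti : σY * σZ = (-1 : ℂ) • (σZ * σY) := by
  simp [σY, σZ, Matrix.mul_fin_two]
lemma σXσY_anti : σX * σY = (-1 : ℂ) • (σY * σX) := by
  rw [σXσY, σYσX]; ext i j; simp

/-- The single-qubit slot of `majorana`. -/
def mslot (n : ℕ) (μ : Fin (2 * n)) (j : Fin n) : Matrix (Fin 2) (Fin 2) ℂ :=
  if (j : ℕ) < (μ : ℕ) / 2 then σZ
  else if (j : ℕ) = (μ : ℕ) / 2 then (if (μ : ℕ) % 2 = 0 then σX else σY)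
  else 1

lemma majorana_eq (n : ℕ) (μ : Fin (2 * n)) : majorana n μ = tensor (mslot n μ) := rfl

lemma mslot_sq (n : ℕ) (μ : Fin (2 * n)) (j : Fin n) : mslot n μ j * mslot n μ j = 1 := by
  unfold mslot
  split_ifs <;> simp [σX_sq, σY_sq, σZ_sq]

lemma majorana_sq (n : ℕ) (μ : Fin (2 * n)) : majorana n μ * majorana n μ = 1 := by
  rw [majorana_eq, tensor_mul]
  rw [show (fun i => mslot n μ i * mslot n μ i) = fun _ : Fin n => (1 : Matrix (Fin 2) (Fin 2) ℂ)
    from funext fun i => mslot_sq n μ i]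
  exact tensor_one

lemma half_lt (n : ℕ) (μ : Fin (2 * n)) : (μ : ℕ) / 2 < n := by
  have := μ.isLt
  omega

lemma mslot_eq_Z {n : ℕ} (μ : Fin (2 * n)) (j : Fin n) (h : (j : ℕ) < (μ : ℕ) / 2) :
    mslot n μ j = σZ := by
  unfold mslot; rw [if_pos h]

lemma mslot_eq_XY {n : ℕ} (μ : Fin (2 * n)) (j : Fin n) (h : (j : ℕ) = (μ : ℕ) / 2) :
    mslot n μ j = (if (μ : ℕ) % 2 = 0 then σX else σY) := by
  unfold mslot; rw [if_neg (by omega), if_pos h]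

lemma mslot_eq_one {n : ℕ} (μ : Fin (2 * n)) (j : Fin n) (h : (μ : ℕ) / 2 < (j : ℕ)) :
    mslot n μ j = 1 := by
  unfold mslot; rw [if_neg (by omega), if_neg (by omega)]

lemma majorana_anticomm' {n : ℕ} (μ ν : Fin (2 * n)) (h : (μ : ℕ) < (ν : ℕ)) :
    majorana n μ * majorana n ν = (-1 : ℂ) • (majorana n ν * majorana n μ) := by
  rw [majorana_eq, majorana_eq, tensor_mul, tensor_mul]
  have hpq : (μ : ℕ) / 2 ≤ (ν : ℕ) / 2 := Nat.div_le_div_right h.le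
  refine tensor_eq_smul _ _ ⟨(μ : ℕ) / 2, half_lt n μ⟩ (-1) ?_ ?_
  · -- the differing slot
    rw [mslot_eq_XY μ _ rfl]
    rcases lt_or_eq_of_le hpq with hlt | heq
    · rw [mslot_eq_Z ν _ hlt]
      split_ifs
      · exact σXσZ_anti
      · exact σYσZ_anti
    · rw [mslot_eq_XY ν _ (show ((⟨(μ:ℕ)/2, half_lt n μ⟩ : Fin n) : ℕ) = (ν:ℕ)/2 from heq)]
      have hμ0 : (μ : ℕ) % 2 = 0 := by omega
      rw [if_pos hμ0, if_neg (by omega : ¬ (ν : ℕ) % 2 = 0)]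
      exact σXσY_anti
  · intro i hi
    show mslot n μ i * mslot n ν i = mslot n ν i * mslot n μ i
    have hi' : (i : ℕ) ≠ (μ : ℕ) / 2 := fun hc => hi (Fin.ext hc)
    rcases lt_or_gt_of_ne hi' with hlt | hgt
    · rw [mslot_eq_Z μ _ hlt, mslot_eq_Z ν _ (lt_of_lt_of_le hlt hpq)]
    · rw [mslot_eq_one μ _ hgt, one_mul, mul_one]

lemma majorana_anticomm {n : ℕ} (μ ν : Fin (2 * n)) (h : μ ≠ ν) :
    majorana n μ * majorana n ν = (-1 : ℂ) • (majorana n ν * majorana n μ) := by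
  rcases lt_or_gt_of_ne (fun hc : (μ:ℕ) = (ν:ℕ) => h (Fin.ext hc)) with hlt | hgt
  · exact majorana_anticomm' μ ν hlt
  · rw [majorana_anticomm' ν μ hgt]
    ext f g; simp


/-- Product of Majorana operators along a list of indices. -/
def mlist (n : ℕ) (l : List (Fin (2 * n))) : NMat n := (l.map (majorana n)).prod

lemma mlist_nil (n : ℕ) : mlist n [] = 1 := rfl

lemma mlist_cons (n : ℕ) (x : Fin (2 * n)) (l : List (Fin (2 * n))) :
    mlist n (x :: l) = majorana n x * mlist n l := by
  simp [mlist]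

lemma mlist_append (n : ℕ) (l₁ l₂ : List (Fin (2 * n))) :
    mlist n (l₁ ++ l₂) = mlist n l₁ * mlist n l₂ := by
  simp [mlist]

lemma sign_sq {n : ℕ} (k : ℕ) (M : NMat n) : ((-1:ℂ)^k) • ((-1:ℂ)^k) • M = M := by
  rw [smul_smul, ← pow_add, Even.neg_one_pow ⟨k, rfl⟩, one_smul]

lemma maj_move_notMem {n : ℕ} {μ : Fin (2 * n)} {l : List (Fin (2 * n))} (h : μ ∉ l) :
    majorana n μ * mlist n l = ((-1:ℂ) ^ l.length) • (mlist n l * majorana n μ) := by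
  induction l with
  | nil => simp [mlist_nil]
  | cons x t ih =>
    have hx : μ ≠ x := fun hc => h (hc ▸ List.mem_cons_self)
    have ht : μ ∉ t := fun hc => h (List.mem_cons_of_mem x hc)
    rw [mlist_cons, ← mul_assoc, majorana_anticomm μ x hx, smul_mul_assoc, mul_assoc,
      ih ht, mul_smul_comm, smul_smul]
    rw [List.length_cons, pow_succ]
    rw [← mul_assoc]
    ring_nf

lemma maj_move_notMem' {n : ℕ} {μ : Fin (2 * n)} {l : List (Fin (2 * n))} (h : μ ∉ l) :
    mlist n l * majorana n μ = ((-1:ℂ) ^ l.length) • (majorana n μ * mlist n l) := by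
  rw [maj_move_notMem h, sign_sq]

lemma maj_move_mem {n : ℕ} {μ : Fin (2 * n)} {l : List (Fin (2 * n))} (hnd : l.Nodup)
    (h : μ ∈ l) :
    majorana n μ * mlist n l = ((-1:ℂ) ^ (l.length + 1)) • (mlist n l * majorana n μ) := by
  induction l with
  | nil => simp at h
  | cons x t ih =>
    rcases List.mem_cons.mp h with hx | ht
    · subst hx
      have hμt : μ ∉ t := (List.nodup_cons.mp hnd).1
      rw [mlist_cons, ← mul_assoc, majorana_sq, one_mul, mul_assoc,
        maj_move_notMem' hμt, mul_smul_comm, ← mul_assoc, majorana_sq, one_mul]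
      rw [List.length_cons, smul_smul, ← pow_add]
      rw [show t.length + 1 + 1 + t.length = 2 * (t.length + 1) by ring, pow_mul]
      norm_num
    · have hx : μ ≠ x := by
        rintro rfl
        exact (List.nodup_cons.mp hnd).1 ht
      rw [mlist_cons, ← mul_assoc, majorana_anticomm μ x hx, smul_mul_assoc, mul_assoc,
        ih (List.nodup_cons.mp hnd).2 ht, mul_smul_comm, smul_smul]
      simp only [List.length_cons, pow_succ, mul_assoc]
      ring_nf

lemma pair_comm_notMem {n : ℕ} {a b : Fin (2 * n)} {l : List (Fin (2 * n))}
    (ha : a ∉ l) (hb : b ∉ l) :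
    (majorana n a * majorana n b) * mlist n l = mlist n l * (majorana n a * majorana n b) := by
  rw [mul_assoc, maj_move_notMem hb, mul_smul_comm, ← mul_assoc, maj_move_notMem ha,
    smul_mul_assoc, sign_sq, mul_assoc]

lemma pair_comm_mem {n : ℕ} {a b : Fin (2 * n)} {l : List (Fin (2 * n))} (hnd : l.Nodup)
    (ha : a ∈ l) (hb : b ∈ l) :
    (majorana n a * majorana n b) * mlist n l = mlist n l * (majorana n a * majorana n b) := by
  rw [mul_assoc, maj_move_mem hnd hb, mul_smul_comm, ← mul_assoc, maj_move_mem hnd ha,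
    smul_mul_assoc, sign_sq, mul_assoc]

lemma maj_aba {n : ℕ} {a b : Fin (2 * n)} (hab : a ≠ b) :
    majorana n a * majorana n b * majorana n a = (-1:ℂ) • majorana n b := by
  rw [mul_assoc, majorana_anticomm b a hab.symm, mul_smul_comm, ← mul_assoc, majorana_sq,
    one_mul]

section Swap
variable {n : ℕ} {a b : Fin (2 * n)} {l₁ l₂ : List (Fin (2 * n))}

lemma swap_mul_left (hab : a ≠ b) (ha₁ : a ∉ l₁) (hb₁ : b ∉ l₁) :
    (majorana n a * majorana n b) * (mlist n l₁ * majorana n a * mlist n l₂) =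
      -(mlist n l₁ * majorana n b * mlist n l₂) := by
  rw [show mlist n l₁ * majorana n a * mlist n l₂ = mlist n l₁ * (majorana n a * mlist n l₂) by
    rw [mul_assoc], ← mul_assoc, pair_comm_notMem ha₁ hb₁]
  rw [mul_assoc (mlist n l₁), ← mul_assoc (majorana n a * majorana n b), ← mul_assoc,
    mul_assoc (mlist n l₁) _ (mlist n l₂)]
  rw [show majorana n a * majorana n b * majorana n a = (-1:ℂ) • majorana n b from maj_aba hab]
  rw [smul_mul_assoc, mul_smul_comm, neg_one_smul, mul_assoc]

lemma swap_mul_right (ha₂ : a ∉ l₂) (hb₂ : b ∉ l₂) :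
    (mlist n l₁ * majorana n a * mlist n l₂) * (majorana n a * majorana n b) =
      mlist n l₁ * majorana n b * mlist n l₂ := by
  rw [mul_assoc, ← mul_assoc (mlist n l₂), maj_move_notMem' ha₂, smul_mul_assoc, mul_assoc,
    mul_smul_comm]
  rw [← mul_assoc (majorana n a) (majorana n a * mlist n l₂) (majorana n b),
    ← mul_assoc (majorana n a) (majorana n a) (mlist n l₂)]
  rw [majorana_sq, one_mul, maj_move_notMem' hb₂, sign_sq, ← mul_assoc]

lemma swap_mul_left' (hab : a ≠ b) (ha₁ : a ∉ l₁) (hb₁ : b ∉ l₁) :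
    (majorana n a * majorana n b) * (mlist n l₁ * majorana n b * mlist n l₂) =
      mlist n l₁ * majorana n a * mlist n l₂ := by
  rw [show mlist n l₁ * majorana n b * mlist n l₂ = mlist n l₁ * (majorana n b * mlist n l₂) by
    rw [mul_assoc], ← mul_assoc, pair_comm_notMem ha₁ hb₁]
  rw [mul_assoc (mlist n l₁), ← mul_assoc (majorana n a * majorana n b), ← mul_assoc,
    mul_assoc (mlist n l₁) _ (mlist n l₂)]
  rw [mul_assoc (majorana n a), majorana_sq, mul_one, ← mul_assoc]

lemma swap_mul_right' (hab : a ≠ b) (ha₂ : a ∉ l₂) (hb₂ : b ∉ l₂) :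
    (mlist n l₁ * majorana n b * mlist n l₂) * (majorana n a * majorana n b) =
      -(mlist n l₁ * majorana n a * mlist n l₂) := by
  rw [mul_assoc, ← mul_assoc (mlist n l₂), maj_move_notMem' ha₂, smul_mul_assoc, mul_assoc,
    mul_smul_comm]
  rw [← mul_assoc (majorana n b) (majorana n a * mlist n l₂) (majorana n b),
    ← mul_assoc (majorana n b) (majorana n a) (mlist n l₂)]
  rw [majorana_anticomm b a hab.symm, smul_mul_assoc, smul_mul_assoc, smul_smul]
  rw [mul_assoc (majorana n a * majorana n b), maj_move_notMem' hb₂, mul_smul_comm,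
    mul_smul_comm, mul_smul_comm, smul_smul]
  rw [← mul_assoc (majorana n a * majorana n b) (majorana n b) (mlist n l₂),
    mul_assoc (majorana n a) (majorana n b) (majorana n b), majorana_sq, mul_one]
  rw [show (-1:ℂ)^l₂.length * -1 * (-1:ℂ)^l₂.length =
    (-1) * ((-1)^l₂.length * (-1)^l₂.length) by ring, ← pow_add,
    Even.neg_one_pow ⟨l₂.length, rfl⟩, mul_one, neg_one_smul, ← mul_assoc]

end Swap

lemma cProd_eq_mlist (n : ℕ) (s : Finset (Fin (2 * n))) :
    cProd n s = mlist n (s.sort (· ≤ ·)) := rfl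

lemma pair_comm_cProd {n : ℕ} {a b : Fin (2 * n)} {s : Finset (Fin (2 * n))}
    (h : a ∈ s ↔ b ∈ s) :
    (majorana n a * majorana n b) * cProd n s = cProd n s * (majorana n a * majorana n b) := by
  rw [cProd_eq_mlist]
  by_cases ha : a ∈ s
  · exact pair_comm_mem (Finset.sort_nodup s _) ((Finset.mem_sort _).mpr ha)
      ((Finset.mem_sort _).mpr (h.mp ha))
  · exact pair_comm_notMem (fun hc => ha ((Finset.mem_sort _).mp hc))
      (fun hc => (fun hbs => ha (h.mpr hbs)) ((Finset.mem_sort _).mp hc))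

/-- The key decomposition: if `a ∈ s`, `b ∉ s`, `b = a+1`, then the sorted lists of `s` and of
`s` with `a` replaced by `b` share the same prefix and suffix. -/
lemma sort_decomp {n : ℕ} {a b : Fin (2 * n)} {s : Finset (Fin (2 * n))}
    (ha : a ∈ s) (hb : b ∉ s) (hba : (b : ℕ) = (a : ℕ) + 1) :
    ∃ l₁ l₂ : List (Fin (2 * n)),
      a ∉ l₁ ∧ b ∉ l₁ ∧ a ∉ l₂ ∧ b ∉ l₂ ∧
      cProd n s = mlist n l₁ * majorana n a * mlist n l₂ ∧
      cProd n (insert b (s.erase a)) = mlist n l₁ * majorana n b * mlist n l₂ := by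
  have hab : a ≠ b := fun hc => hb (hc ▸ ha)
  obtain ⟨l₁, l₂, hl⟩ := List.append_of_mem ((Finset.mem_sort (α := Fin (2*n)) (· ≤ ·)).mpr ha)
  have hnd := Finset.sort_nodup (α := Fin (2*n)) s (· ≤ ·)
  rw [hl] at hnd
  have hsort := Finset.pairwise_sort (α := Fin (2*n)) s (· ≤ ·)
  rw [hl] at hsort
  rw [List.pairwise_append] at hsort
  obtain ⟨hs₁, hs₂, hs₁₂⟩ := hsort
  have hbsort : b ∉ s.sort (· ≤ ·) := fun hc => hb ((Finset.mem_sort _).mp hc)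
  rw [hl] at hbsort
  have hb₁ : b ∉ l₁ := fun hc => hbsort (List.mem_append.mpr (Or.inl hc))
  have hb₂ : b ∉ l₂ := fun hc => hbsort (List.mem_append.mpr (Or.inr (List.mem_cons_of_mem a hc)))
  have hnd' := hnd
  rw [List.nodup_append] at hnd'
  obtain ⟨hnd₁, hnd₂, hdisj⟩ := hnd'
  have hndal₂ := hnd₂
  rw [List.nodup_cons] at hndal₂
  obtain ⟨ha₂, hnd₂'⟩ := hndal₂
  have ha₁ : a ∉ l₁ := fun hc => hdisj a hc a List.mem_cons_self rfl
  refine ⟨l₁, l₂, ha₁, hb₁, ha₂, hb₂, ?_, ?_⟩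
  · rw [cProd_eq_mlist, hl, mlist_append, mlist_cons, ← mul_assoc]
  · -- sorted list of the swapped set
    have hle₂ : ∀ y ∈ l₂, b ≤ y := by
      intro y hy
      have hay : a ≤ y := (List.pairwise_cons.mp hs₂).1 y hy
      have hne : a ≠ y := fun hc => ha₂ (hc ▸ hy)
      have : (a : ℕ) < (y : ℕ) := lt_of_le_of_ne hay (fun hc => hne (Fin.ext hc))
      exact (by omega : (b : ℕ) ≤ (y : ℕ))
  -- `Fin.le_def`
    have hle₁ : ∀ x ∈ l₁, ∀ y ∈ b :: l₂, x ≤ y := by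
      intro x hx y hy
      have hxa : x ≤ a := hs₁₂ x hx a List.mem_cons_self
      rcases List.mem_cons.mp hy with rfl | hy
      · exact le_trans hxa (by omega : (a:ℕ) ≤ (y:ℕ))
      · exact le_trans hxa ((List.pairwise_cons.mp hs₂).1 y hy)
    have hsorted' : List.Pairwise (· ≤ ·) (l₁ ++ b :: l₂) := by
      rw [List.pairwise_append]
      exact ⟨hs₁, List.pairwise_cons.mpr ⟨hle₂, (List.pairwise_cons.mp hs₂).2⟩, hle₁⟩
    have hnd'' : (l₁ ++ b :: l₂).Nodup := by
      rw [List.nodup_append]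
      refine ⟨hnd₁, List.nodup_cons.mpr ⟨hb₂, hnd₂'⟩, ?_⟩
      intro x hx _ hx' rfl
      rcases List.mem_cons.mp hx' with rfl | hx''
      · exact hb₁ hx
      · exact hdisj _ hx _ (List.mem_cons_of_mem a hx'') rfl
    have htf : (l₁ ++ b :: l₂).toFinset = insert b (s.erase a) := by
      have hstf : s = (l₁ ++ a :: l₂).toFinset := by
        rw [← hl, Finset.sort_toFinset]
      rw [hstf]
      ext x
      simp only [List.toFinset_append, List.toFinset_cons, Finset.mem_union, Finset.mem_insert,
        List.mem_toFinset, Finset.mem_erase]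
      constructor
      · rintro (hx | rfl | hx)
        · exact Or.inr ⟨fun hc => ha₁ (hc ▸ hx), Or.inl hx⟩
        · exact Or.inl rfl
        · exact Or.inr ⟨fun hc => ha₂ (hc ▸ hx), Or.inr (Or.inr hx)⟩
      · rintro (rfl | ⟨hne, hx | rfl | hx⟩)
        · exact Or.inr (Or.inl rfl)
        · exact Or.inl hx
        · exact absurd rfl hne
        · exact Or.inr (Or.inr hx)
    have hperm : (insert b (s.erase a)).sort (· ≤ ·) = l₁ ++ b :: l₂ := by
      refine List.Perm.eq_of_pairwise' (Finset.pairwise_sort _ _) hsorted' ?_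
      exact List.perm_of_nodup_nodup_toFinset_eq (Finset.sort_nodup _ _) hnd''
        (by rw [Finset.sort_toFinset, htf])
    rw [cProd_eq_mlist, hperm, mlist_append, mlist_cons, ← mul_assoc]

lemma sub_kronecker {n : ℕ} (A B C : NMat n) :
    (A - B) ⊗ₖ C = A ⊗ₖ C - B ⊗ₖ C := by
  ext ⟨i, j⟩ ⟨k, l⟩
  simp [Matrix.kroneckerMap_apply, sub_mul]

lemma kronecker_sub {n : ℕ} (A B C : NMat n) :
    A ⊗ₖ (B - C) = A ⊗ₖ B - A ⊗ₖ C := by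
  ext ⟨i, j⟩ ⟨k, l⟩
  simp [Matrix.kroneckerMap_apply, mul_sub]

lemma bigH_comm_kron {n : ℕ} (H A B : NMat n) :
    bigH n H * (A ⊗ₖ B) - (A ⊗ₖ B) * bigH n H =
      (H * A - A * H) ⊗ₖ B + A ⊗ₖ (H * B - B * H) := by
  unfold bigH
  rw [add_mul, mul_add, ← Matrix.mul_kronecker_mul, ← Matrix.mul_kronecker_mul,
    ← Matrix.mul_kronecker_mul, ← Matrix.mul_kronecker_mul, one_mul, mul_one, one_mul, mul_one,
    sub_kronecker, kronecker_sub]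
  abel

section AdLemmas
variable {n : ℕ} {a b : Fin (2 * n)} {s : Finset (Fin (2 * n))} {H : NMat n}

lemma insert_erase_swap {α : Type*} [DecidableEq α] {s : Finset α} {a b : α}
    (ha : a ∈ s) (hb : b ∉ s) :
    insert a ((insert b (s.erase a)).erase b) = s := by
  have hab : a ≠ b := fun hc => hb (hc ▸ ha)
  ext x
  simp only [Finset.mem_insert, Finset.mem_erase]
  constructor
  · rintro (rfl | ⟨hxb, rfl | ⟨hxa, hx⟩⟩)
    · exact ha
    · exact absurd rfl hxb
    · exact hx
  · intro hx
    by_cases hxa : x = a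
    · exact Or.inl hxa
    · exact Or.inr ⟨fun hc => hb (hc ▸ hx), Or.inr ⟨hxa, hx⟩⟩

lemma compl_insert_erase {n : ℕ} {s : Finset (Fin (2 * n))} {a b : Fin (2 * n)}
    (ha : a ∈ s) (hb : b ∉ s) :
    (insert b (s.erase a))ᶜ = insert a (sᶜ.erase b) := by
  have hab : a ≠ b := fun hc => hb (hc ▸ ha)
  ext x
  simp only [Finset.mem_compl, Finset.mem_insert, Finset.mem_erase]
  constructor
  · intro hx
    push_neg at hx
    obtain ⟨hxb, hx2⟩ := hx
    by_cases hxa : x = a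
    · exact Or.inl hxa
    · exact Or.inr ⟨hxb, fun hc => (hx2 hxa) hc⟩
  · rintro (rfl | ⟨hxb, hxs⟩) <;> push_neg <;> refine ⟨?_, ?_⟩
    · exact fun hc => hb (hc ▸ ha)
    · intro h; exact absurd rfl h
    · exact hxb
    · intro _; exact hxs

lemma card_swap {n : ℕ} {s : Finset (Fin (2 * n))} {a b : Fin (2 * n)}
    (ha : a ∈ s) (hb : b ∉ s) :
    (insert b (s.erase a)).card = s.card := by
  have hab : a ≠ b := fun hc => hb (hc ▸ ha)
  rw [Finset.card_insert_of_notMem (fun hc => hb (Finset.mem_of_mem_erase hc)),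
    Finset.card_erase_of_mem ha]
  have : 1 ≤ s.card := Finset.card_pos.mpr ⟨a, ha⟩
  omega

lemma piSum_swap {n : ℕ} {s : Finset (Fin (2 * n))} {a b : Fin (2 * n)}
    (ha : a ∈ s) (hb : b ∉ s) (hba : (b : ℕ) = (a : ℕ) + 1) :
    piSum n (insert b (s.erase a)) = piSum n s + 1 := by
  unfold piSum
  rw [Finset.sum_insert (fun hc => hb (Finset.mem_of_mem_erase hc))]
  have h2 : ((a:ℕ) + 1) + ∑ μ ∈ s.erase a, ((μ : ℕ) + 1) = ∑ μ ∈ s, ((μ:ℕ) + 1) :=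
    Finset.add_sum_erase s (fun μ => (μ : ℕ) + 1) ha
  omega

lemma ad_even (hH : H = (-Complex.I) • (majorana n a * majorana n b))
    (h : a ∈ s ↔ b ∈ s) :
    H * cProd n s - cProd n s * H = 0 := by
  rw [hH, smul_mul_assoc, mul_smul_comm, pair_comm_cProd h, sub_self]

lemma ad_single_a (hH : H = (-Complex.I) • (majorana n a * majorana n b))
    (ha : a ∈ s) (hb : b ∉ s) (hba : (b : ℕ) = (a : ℕ) + 1) :
    H * cProd n s - cProd n s * H =
      (2 * Complex.I) • cProd n (insert b (s.erase a)) := by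
  have hab : a ≠ b := fun hc => hb (hc ▸ ha)
  obtain ⟨l₁, l₂, ha₁, hb₁, ha₂, hb₂, hcs, hcs'⟩ := sort_decomp ha hb hba
  rw [hH, smul_mul_assoc, mul_smul_comm, hcs, hcs',
    swap_mul_left hab ha₁ hb₁, swap_mul_right ha₂ hb₂]
  module

lemma ad_single_b (hH : H = (-Complex.I) • (majorana n a * majorana n b))
    (hb : b ∈ s) (ha : a ∉ s) (hba : (b : ℕ) = (a : ℕ) + 1) :
    H * cProd n s - cProd n s * H =
      (-(2 * Complex.I)) • cProd n (insert a (s.erase b)) := by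
  have hab : a ≠ b := fun hc => ha (hc ▸ hb)
  set u := insert a (s.erase b) with hu
  have hau : a ∈ u := Finset.mem_insert_self a _
  have hbu : b ∉ u := by
    rw [hu]
    intro hc
    rcases Finset.mem_insert.mp hc with hc | hc
    · exact hab hc.symm
    · exact (Finset.notMem_erase b s) hc
  have hs : insert b (u.erase a) = s := insert_erase_swap hb ha
  obtain ⟨l₁, l₂, ha₁, hb₁, ha₂, hb₂, hcu, hcs⟩ := sort_decomp hau hbu hba
  rw [hs] at hcs
  rw [hH, smul_mul_assoc, mul_smul_comm, hcs]
  rw [swap_mul_left' hab ha₁ hb₁, swap_mul_right' hab ha₂ hb₂, ← hcu]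
  module

end AdLemmas

lemma neg_I_smul_I_smul {n : ℕ} (M : NMat n) : M = (-Complex.I) • (Complex.I • M) := by
  rw [smul_smul]
  norm_num [Complex.I_mul_I]

lemma pauliZ_eq {n : ℕ} (j : Fin n) (a b : Fin (2 * n)) (haj : (a : ℕ) = 2 * (j : ℕ))
    (hbj : (b : ℕ) = 2 * (j : ℕ) + 1) :
    pauliZ n j = (-Complex.I) • (majorana n a * majorana n b) := by
  have hda : (a : ℕ) / 2 = (j : ℕ) := by omega
  have hdb : (b : ℕ) / 2 = (j : ℕ) := by omega
  rw [majorana_eq, majorana_eq, tensor_mul]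
  have h : tensor (fun i => mslot n a i * mslot n b i)
      = Complex.I • tensor (fun k : Fin n => if k = j then σZ else 1) := by
    refine tensor_eq_smul _ _ j Complex.I ?_ ?_
    · rw [mslot_eq_XY a j hda.symm, mslot_eq_XY b j hdb.symm,
        if_pos (by omega : (a : ℕ) % 2 = 0), if_neg (by omega : ¬ (b : ℕ) % 2 = 0),
        if_pos rfl]
      exact σXσY
    · intro i hi
      have hij : (i : ℕ) ≠ (j : ℕ) := fun hc => hi (Fin.ext hc)
      rw [if_neg hi]
      rcases lt_or_gt_of_ne hij with hlt | hgt
      · rw [mslot_eq_Z a i (by omega), mslot_eq_Z b i (by omega), σZ_sq]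
      · rw [mslot_eq_one a i (by omega), mslot_eq_one b i (by omega), one_mul]
  rw [h]
  exact neg_I_smul_I_smul _

lemma pauliXX_eq {n : ℕ} (j : Fin n) (a b : Fin (2 * n)) (haj : (a : ℕ) = 2 * (j : ℕ) + 1)
    (hbj : (b : ℕ) = 2 * (j : ℕ) + 2) :
    pauliXX n j = (-Complex.I) • (majorana n a * majorana n b) := by
  have hda : (a : ℕ) / 2 = (j : ℕ) := by omega
  have hdb : (b : ℕ) / 2 = (j : ℕ) + 1 := by omega
  rw [majorana_eq, majorana_eq, tensor_mul]
  have h : tensor (fun i => mslot n a i * mslot n b i)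
      = Complex.I • tensor
        (fun k : Fin n => if (k : ℕ) = (j : ℕ) ∨ (k : ℕ) = (j : ℕ) + 1 then σX else 1) := by
    refine tensor_eq_smul _ _ j Complex.I ?_ ?_
    · rw [mslot_eq_XY a j hda.symm, mslot_eq_Z b j (by omega),
        if_neg (by omega : ¬ (a : ℕ) % 2 = 0), if_pos (Or.inl rfl)]
      exact σYσZ
    · intro i hi
      have hij : (i : ℕ) ≠ (j : ℕ) := fun hc => hi (Fin.ext hc)
      rcases lt_or_gt_of_ne hij with hlt | hgt
      · rw [if_neg (by omega), mslot_eq_Z a i (by omega), mslot_eq_Z b i (by omega), σZ_sq]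
      · rcases eq_or_lt_of_le (by omega : (j : ℕ) + 1 ≤ (i : ℕ)) with heq | hgt'
        · rw [if_pos (Or.inr heq.symm), mslot_eq_one a i (by omega),
            mslot_eq_XY b i (by omega), if_pos (by omega : (b : ℕ) % 2 = 0), one_mul]
        · rw [if_neg (by omega), mslot_eq_one a i (by omega), mslot_eq_one b i (by omega),
            one_mul]
  rw [h]
  exact neg_I_smul_I_smul _

section SumLemmas
variable {n : ℕ} {a b : Fin (2 * n)} {H : NMat n}

lemma a_not_mem_swap {s : Finset (Fin (2 * n))} (hab : a ≠ b) :
    a ∉ insert b (s.erase a) := by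
  intro hc
  rcases Finset.mem_insert.mp hc with hc | hc
  · exact hab hc
  · exact Finset.notMem_erase a s hc

lemma sum0_comm (hH : H = (-Complex.I) • (majorana n a * majorana n b))
    (hba : (b : ℕ) = (a : ℕ) + 1) (κ : ℕ) :
    ∑ s ∈ Finset.powersetCard κ (Finset.univ : Finset (Fin (2 * n))),
      (bigH n H * (cProd n s ⊗ₖ cProd n s) - (cProd n s ⊗ₖ cProd n s) * bigH n H) = 0 := by
  have hab : a ≠ b := fun hc => by rw [hc] at hba; omega
  have hzero : ∀ s : Finset (Fin (2 * n)), (a ∈ s ↔ b ∈ s) →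
      bigH n H * (cProd n s ⊗ₖ cProd n s) - (cProd n s ⊗ₖ cProd n s) * bigH n H = 0 := by
    intro s hs
    rw [bigH_comm_kron, ad_even hH hs]
    simp
  refine Finset.sum_involution
    (fun s _ => if a ∈ s ∧ b ∉ s then insert b (s.erase a)
      else if b ∈ s ∧ a ∉ s then insert a (s.erase b) else s) ?_ ?_ ?_ ?_
  · intro s hs
    by_cases h1 : a ∈ s ∧ b ∉ s
    · simp only [if_pos h1]
      have hb' : b ∈ insert b (s.erase a) := Finset.mem_insert_self _ _
      have ha' : a ∉ insert b (s.erase a) := a_not_mem_swap hab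
      rw [bigH_comm_kron, bigH_comm_kron, ad_single_a hH h1.1 h1.2 hba,
        ad_single_b hH hb' ha' hba, insert_erase_swap h1.1 h1.2,
        Matrix.smul_kronecker, Matrix.kronecker_smul, Matrix.smul_kronecker,
        Matrix.kronecker_smul]
      module
    · by_cases h2 : b ∈ s ∧ a ∉ s
      · simp only [if_neg h1, if_pos h2]
        have ha' : a ∈ insert a (s.erase b) := Finset.mem_insert_self _ _
        have hb' : b ∉ insert a (s.erase b) := a_not_mem_swap hab.symm
        rw [bigH_comm_kron, bigH_comm_kron, ad_single_b hH h2.1 h2.2 hba,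
          ad_single_a hH ha' hb' hba, insert_erase_swap h2.1 h2.2,
          Matrix.smul_kronecker, Matrix.kronecker_smul, Matrix.smul_kronecker,
          Matrix.kronecker_smul]
        module
      · simp only [if_neg h1, if_neg h2]
        rw [hzero s (by tauto)]
        simp
  · intro s hs hf
    by_cases h1 : a ∈ s ∧ b ∉ s
    · simp only [if_pos h1]
      intro hc
      exact h1.2 (hc ▸ Finset.mem_insert_self b (s.erase a))
    · by_cases h2 : b ∈ s ∧ a ∉ s
      · simp only [if_neg h1, if_pos h2]
        intro hc
        exact h2.2 (hc ▸ Finset.mem_insert_self a (s.erase b))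
      · exact absurd (hzero s (by tauto)) hf
  · intro s hs
    rw [Finset.mem_powersetCard] at hs ⊢
    by_cases h1 : a ∈ s ∧ b ∉ s
    · simp only [if_pos h1]
      exact ⟨Finset.subset_univ _, by rw [card_swap h1.1 h1.2, hs.2]⟩
    · by_cases h2 : b ∈ s ∧ a ∉ s
      · simp only [if_neg h1, if_pos h2]
        exact ⟨Finset.subset_univ _, by rw [card_swap h2.1 h2.2, hs.2]⟩
      · simpa [if_neg h1, if_neg h2] using hs
  · intro s hs
    by_cases h1 : a ∈ s ∧ b ∉ s
    · simp only [if_pos h1]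
      have hb' : b ∈ insert b (s.erase a) := Finset.mem_insert_self _ _
      have ha' : a ∉ insert b (s.erase a) := a_not_mem_swap hab
      rw [if_neg (by tauto), if_pos ⟨hb', ha'⟩]
      exact insert_erase_swap h1.1 h1.2
    · by_cases h2 : b ∈ s ∧ a ∉ s
      · simp only [if_neg h1, if_pos h2]
        have ha' : a ∈ insert a (s.erase b) := Finset.mem_insert_self _ _
        have hb' : b ∉ insert a (s.erase b) := a_not_mem_swap hab.symm
        rw [if_pos ⟨ha', hb'⟩]
        exact insert_erase_swap h2.1 h2.2
      · simp only [if_neg h1, if_neg h2]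

end SumLemmas

section Sum1
variable {n : ℕ} {a b : Fin (2 * n)} {H : NMat n}

lemma comm_smul {n : ℕ} (X : NMat2 n) (z : ℂ) (M : NMat2 n) :
    X * (z • M) - (z • M) * X = z • (X * M - M * X) := by
  rw [mul_smul_comm, smul_mul_assoc, smul_sub]

lemma sum1_comm (hH : H = (-Complex.I) • (majorana n a * majorana n b))
    (hba : (b : ℕ) = (a : ℕ) + 1) (κ : ℕ) :
    ∑ s ∈ Finset.powersetCard κ (Finset.univ : Finset (Fin (2 * n))),
      (bigH n H * (((-1 : ℂ)) ^ (piSum n s) • (cProd n s ⊗ₖ cProd n sᶜ)) -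
        (((-1 : ℂ)) ^ (piSum n s) • (cProd n s ⊗ₖ cProd n sᶜ)) * bigH n H) = 0 := by
  have hab : a ≠ b := fun hc => by rw [hc] at hba; omega
  have hzero : ∀ s : Finset (Fin (2 * n)), (a ∈ s ↔ b ∈ s) →
      bigH n H * (((-1 : ℂ)) ^ (piSum n s) • (cProd n s ⊗ₖ cProd n sᶜ)) -
        (((-1 : ℂ)) ^ (piSum n s) • (cProd n s ⊗ₖ cProd n sᶜ)) * bigH n H = 0 := by
    intro s hs
    have hsc : a ∈ sᶜ ↔ b ∈ sᶜ := by
      simp only [Finset.mem_compl]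
      exact not_congr hs
    rw [comm_smul, bigH_comm_kron, ad_even hH hs, ad_even hH hsc]
    simp
  refine Finset.sum_involution
    (fun s _ => if a ∈ s ∧ b ∉ s then insert b (s.erase a)
      else if b ∈ s ∧ a ∉ s then insert a (s.erase b) else s) ?_ ?_ ?_ ?_
  · intro s hs
    by_cases h1 : a ∈ s ∧ b ∉ s
    · simp only [if_pos h1]
      set s' := insert b (s.erase a) with hs'
      have hb' : b ∈ s' := Finset.mem_insert_self _ _
      have ha' : a ∉ s' := a_not_mem_swap hab
      have hsc_b : b ∈ sᶜ := Finset.mem_compl.mpr h1.2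
      have hsc_a : a ∉ sᶜ := fun hc => (Finset.mem_compl.mp hc) h1.1
      have hcompl : s'ᶜ = insert a (sᶜ.erase b) := compl_insert_erase h1.1 h1.2
      have hs'c_a : a ∈ s'ᶜ := Finset.mem_compl.mpr ha'
      have hs'c_b : b ∉ s'ᶜ := fun hc => (Finset.mem_compl.mp hc) hb'
      rw [comm_smul, comm_smul, bigH_comm_kron, bigH_comm_kron,
        ad_single_a hH h1.1 h1.2 hba,
        ad_single_b hH hsc_b hsc_a hba, ← hcompl,
        ad_single_b hH hb' ha' hba, insert_erase_swap h1.1 h1.2,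
        ad_single_a hH hs'c_a hs'c_b hba,
        show insert b (s'ᶜ.erase a) = sᶜ by rw [hcompl]; exact insert_erase_swap hsc_b hsc_a,
        piSum_swap h1.1 h1.2 hba, pow_succ,
        Matrix.smul_kronecker, Matrix.kronecker_smul, Matrix.smul_kronecker,
        Matrix.kronecker_smul]
      module
    · by_cases h2 : b ∈ s ∧ a ∉ s
      · simp only [if_neg h1, if_pos h2]
        set u := insert a (s.erase b) with hu
        have ha' : a ∈ u := Finset.mem_insert_self _ _
        have hb' : b ∉ u := a_not_mem_swap hab.symm
        have hsc_a : a ∈ sᶜ := Finset.mem_compl.mpr h2.2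
        have hsc_b : b ∉ sᶜ := fun hc => (Finset.mem_compl.mp hc) h2.1
        have hcompl : uᶜ = insert b (sᶜ.erase a) := compl_insert_erase h2.1 h2.2
        have huc_b : b ∈ uᶜ := Finset.mem_compl.mpr hb'
        have huc_a : a ∉ uᶜ := fun hc => (Finset.mem_compl.mp hc) ha'
        have hpi : piSum n s = piSum n u + 1 := by
          rw [show s = insert b (u.erase a) from (insert_erase_swap h2.1 h2.2).symm]
          exact piSum_swap ha' hb' hba
        rw [comm_smul, comm_smul, bigH_comm_kron, bigH_comm_kron,
          ad_single_b hH h2.1 h2.2 hba,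
          ad_single_a hH hsc_a hsc_b hba, ← hcompl,
          ad_single_a hH ha' hb' hba, insert_erase_swap h2.1 h2.2,
          ad_single_b hH huc_b huc_a hba,
          show insert a (uᶜ.erase b) = sᶜ by rw [hcompl]; exact insert_erase_swap hsc_a hsc_b,
          hpi, pow_succ,
          Matrix.smul_kronecker, Matrix.kronecker_smul, Matrix.smul_kronecker,
          Matrix.kronecker_smul]
        module
      · simp only [if_neg h1, if_neg h2]
        rw [hzero s (by tauto)]
        simp
  · intro s hs hf
    by_cases h1 : a ∈ s ∧ b ∉ s
    · simp only [if_pos h1]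
      intro hc
      exact h1.2 (hc ▸ Finset.mem_insert_self b (s.erase a))
    · by_cases h2 : b ∈ s ∧ a ∉ s
      · simp only [if_neg h1, if_pos h2]
        intro hc
        exact h2.2 (hc ▸ Finset.mem_insert_self a (s.erase b))
      · exact absurd (hzero s (by tauto)) hf
  · intro s hs
    rw [Finset.mem_powersetCard] at hs ⊢
    by_cases h1 : a ∈ s ∧ b ∉ s
    · simp only [if_pos h1]
      exact ⟨Finset.subset_univ _, by rw [card_swap h1.1 h1.2, hs.2]⟩
    · by_cases h2 : b ∈ s ∧ a ∉ s
      · simp only [if_neg h1, if_pos h2]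
        exact ⟨Finset.subset_univ _, by rw [card_swap h2.1 h2.2, hs.2]⟩
      · simpa [if_neg h1, if_neg h2] using hs
  · intro s hs
    by_cases h1 : a ∈ s ∧ b ∉ s
    · simp only [if_pos h1]
      have hb' : b ∈ insert b (s.erase a) := Finset.mem_insert_self _ _
      have ha' : a ∉ insert b (s.erase a) := a_not_mem_swap hab
      rw [if_neg (by tauto), if_pos ⟨hb', ha'⟩]
      exact insert_erase_swap h1.1 h1.2
    · by_cases h2 : b ∈ s ∧ a ∉ s
      · simp only [if_neg h1, if_pos h2]
        have ha' : a ∈ insert a (s.erase b) := Finset.mem_insert_self _ _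
        have hb' : b ∉ insert a (s.erase b) := a_not_mem_swap hab.symm
        rw [if_pos ⟨ha', hb'⟩]
        exact insert_erase_swap h2.1 h2.2
      · simp only [if_neg h1, if_neg h2]

end Sum1

lemma comm_smul_sum {n : ℕ} {ι : Type*} (X : NMat2 n) (z : ℂ) (t : Finset ι)
    (f : ι → NMat2 n) :
    X * (z • ∑ s ∈ t, f s) - (z • ∑ s ∈ t, f s) * X =
      z • ∑ s ∈ t, (X * f s - f s * X) := by
  rw [comm_smul, Finset.mul_sum, Finset.sum_mul, ← Finset.sum_sub_distrib]

lemma Q_comm_of {n : ℕ} {a b : Fin (2 * n)} {H : NMat n}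
    (hH : H = (-Complex.I) • (majorana n a * majorana n b))
    (hba : (b : ℕ) = (a : ℕ) + 1) (κ : ℕ) :
    bigH n H * Q0 n κ - Q0 n κ * bigH n H = 0
    ∧ bigH n H * Q1 n κ - Q1 n κ * bigH n H = 0 := by
  constructor
  · rw [Q0, comm_smul_sum, sum0_comm hH hba, smul_zero]
  · rw [Q1, comm_smul_sum, sum1_comm hH hba, smul_zero]


/-- Each `Q_κ^a` commutes with `H ⊗ I + I ⊗ H` for every matchgate generator `H`. -/
theorem Q_commutes_with_generators (n : ℕ) (hn : 1 ≤ n) (κ : ℕ) (hκ : κ ≤ 2 * n)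
    (H : NMat n) (hH : H ∈ matchgateGens n) :
    bigH n H * Q0 n κ - Q0 n κ * bigH n H = 0
    ∧ bigH n H * Q1 n κ - Q1 n κ * bigH n H = 0 := by
  rcases hH with ⟨j, rfl⟩ | ⟨j, hjn, rfl⟩
  · have hj := j.isLt
    exact Q_comm_of (pauliZ_eq j ⟨2 * (j : ℕ), by omega⟩ ⟨2 * (j : ℕ) + 1, by omega⟩ rfl rfl)
      rfl κ
  · have hj := j.isLt
    exact Q_comm_of
      (pauliXX_eq j ⟨2 * (j : ℕ) + 1, by omega⟩ ⟨2 * (j : ℕ) + 2, by omega⟩ rfl rfl) rfl κ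

end
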